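/- arXiv:1004.4116 — 3 statements merged into one kernel-verified Lean document; each statement's English description precedes it below -/
import Mathlib

section
/- The Ewens Sampling Formula defines a probability distribution: for any θ > 0 and n ≥ 1, the sum over all (c_1,...,c_n) ∈ ℕ^n with c_1 + 2c_2 + ... + nc_n = n of (n!/θ_(n)) · ∏_{j=1}^n (θ/j)^{c_j} / c_j! equals 1, where θ_(n) = θ(θ+1)...(θ+n-1). -/
open Finset

namespace ESF

variable {n : ℕ}

/-- weight of a configuration -/
noncomputable def W (θ : ℝ) (c : Fin n → ℕ) : ℝ :=
  ∏ j : Fin n, (θ / (j.1 + 1)) ^ c j / (Nat.factorial (c j))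

/-- total size -/
def Sg (c : Fin n → ℕ) : ℕ := ∑ j : Fin n, (j.1 + 1) * c j

noncomputable def S (θ : ℝ) (n m : ℕ) : ℝ :=
  ∑' c : Fin n → ℕ, if Sg c = m then W θ c else 0

lemma Sg_le (c : Fin n → ℕ) (j : Fin n) : c j ≤ Sg c := by
  have h := Finset.single_le_sum (f := fun k : Fin n => (k.1 + 1) * c k)
    (fun _ _ => Nat.zero_le _) (mem_univ j)
  have h2 : c j ≤ (j.1 + 1) * c j := Nat.le_mul_of_pos_left _ (Nat.succ_pos _)
  exact le_trans h2 h

lemma summable_aux (m : ℕ) (t : (Fin n → ℕ) → ℝ) :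
    Summable (fun c : Fin n → ℕ => if Sg c = m then t c else 0) := by
  apply summable_of_ne_finset_zero
    (s := Fintype.piFinset fun _ : Fin n => Finset.range (m + 1))
  intro c hc
  rw [Fintype.mem_piFinset] at hc
  push_neg at hc
  obtain ⟨j, hj⟩ := hc
  rw [Finset.mem_range, not_lt] at hj
  rw [if_neg]
  have := Sg_le c j
  omega

lemma Sg_update (c : Fin n → ℕ) (j : Fin n) :
    Sg (Function.update c j (c j + 1)) = Sg c + (j.1 + 1) := by
  unfold Sg
  rw [← Finset.add_sum_erase _ (fun k : Fin n => (k.1 + 1) * Function.update c j (c j + 1) k)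
      (mem_univ j),
    ← Finset.add_sum_erase _ (fun k : Fin n => (k.1 + 1) * c k) (mem_univ j)]
  rw [Finset.sum_congr rfl (fun k hk => by
    rw [Function.update_of_ne (Finset.ne_of_mem_erase hk)])]
  simp [Function.update_self]
  ring

lemma W_update (θ : ℝ) (c : Fin n → ℕ) (j : Fin n) :
    W θ (Function.update c j (c j + 1)) = (θ / (j.1 + 1)) / (c j + 1) * W θ c := by
  unfold W
  rw [← Finset.mul_prod_erase _ (fun k : Fin n => (θ / (k.1 + 1)) ^ Function.update c j (c j + 1) k / (Nat.factorial (Function.update c j (c j + 1) k))) (mem_univ j),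
    ← Finset.mul_prod_erase _ (fun k : Fin n => (θ / (k.1 + 1)) ^ c k / (Nat.factorial (c k))) (mem_univ j)]
  rw [Finset.prod_congr rfl (fun k hk => by
    rw [Function.update_of_ne (Finset.ne_of_mem_erase hk)])]
  rw [Function.update_self]
  have h1 : ((Nat.factorial (c j) : ℝ)) ≠ 0 := Nat.cast_ne_zero.mpr (Nat.factorial_ne_zero _)
  have h2 : ((c j : ℝ) + 1) ≠ 0 := by positivity
  rw [Nat.factorial_succ, pow_succ]
  push_cast
  field_simp

lemma shift (θ : ℝ) (m : ℕ) (j : Fin n) :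
    (∑' c : Fin n → ℕ, if Sg c = m then (((j.1 + 1) * c j : ℕ) : ℝ) * W θ c else 0)
      = if j.1 + 1 ≤ m then θ * S θ n (m - (j.1 + 1)) else 0 := by
  set g : (Fin n → ℕ) → ℝ := fun c => if Sg c = m then (((j.1 + 1) * c j : ℕ) : ℝ) * W θ c else 0
    with hg
  have hinj : Function.Injective (fun c : Fin n → ℕ => Function.update c j (c j + 1)) := by
    intro c d h
    funext k
    by_cases hk : k = j
    · subst hk; have := congrFun h k; simpa using this
    · have := congrFun h k; simpa [Function.update_of_ne hk] using this
  have hvan : ∀ c ∉ Set.range (fun c : Fin n → ℕ => Function.update c j (c j + 1)), g c = 0 := by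
    intro c hc
    have hcj : c j = 0 := by
      by_contra h
      apply hc
      refine ⟨Function.update c j (c j - 1), ?_⟩
      funext k
      by_cases hk : k = j
      · subst hk; simp only [Function.update_self]; omega
      · simp [Function.update_of_ne hk]
    simp [hg, hcj]
  rw [← hinj.tsum_eq (Function.support_subset_iff'.mpr hvan)]
  have hterm : ∀ c : Fin n → ℕ,
      g (Function.update c j (c j + 1))
        = if j.1 + 1 ≤ m then (if Sg c = m - (j.1 + 1) then θ * W θ c else 0) else 0 := by
    intro c
    rw [hg]
    simp only [Sg_update, Function.update_self, W_update]
    by_cases hle : j.1 + 1 ≤ m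
    · rw [if_pos hle]
      by_cases h : Sg c = m - (j.1 + 1)
      · rw [if_pos (by omega), if_pos h]
        have h2 : ((c j : ℝ) + 1) ≠ 0 := by positivity
        have h3 : ((j.1 : ℝ) + 1) ≠ 0 := by positivity
        push_cast
        field_simp
        try ring
      · rw [if_neg (by omega), if_neg h]
    · rw [if_neg hle, if_neg (by omega)]
  rw [tsum_congr hterm]
  by_cases hle : j.1 + 1 ≤ m
  · simp only [if_pos hle]
    rw [S, ← tsum_mul_left]
    exact tsum_congr fun c => by by_cases h : Sg c = m - (j.1 + 1) <;> simp [h]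
  · simp [hle]

lemma step (θ : ℝ) (m : ℕ) (hm : m ≤ n) :
    (m : ℝ) * S θ n m = θ * ∑ k ∈ range m, S θ n k := by
  have h1 : (m : ℝ) * S θ n m
      = ∑' c : Fin n → ℕ, if Sg c = m then (m : ℝ) * W θ c else 0 := by
    rw [S, ← tsum_mul_left]
    exact tsum_congr fun c => by by_cases h : Sg c = m <;> simp [h]
  have h2 : ∀ c : Fin n → ℕ,
      (if Sg c = m then (m : ℝ) * W θ c else 0)
        = ∑ j : Fin n, (if Sg c = m then (((j.1 + 1) * c j : ℕ) : ℝ) * W θ c else 0) := by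
    intro c
    by_cases h : Sg c = m
    · simp only [if_pos h]
      rw [← Finset.sum_mul]
      congr 1
      rw [← Nat.cast_sum]
      exact_mod_cast congrArg (Nat.cast : ℕ → ℝ) h.symm
    · simp [h]
  rw [h1, tsum_congr h2, Summable.tsum_finsetSum (fun j _ => summable_aux m _)]
  rw [Finset.sum_congr rfl (fun j _ => shift θ m j)]
  rw [Fin.sum_univ_eq_sum_range (fun i => if i + 1 ≤ m then θ * S θ n (m - (i + 1)) else 0) n]
  rw [← Finset.sum_subset (Finset.range_subset_range.mpr hm)
    (fun i _ hi => by rw [if_neg]; rw [Finset.mem_range, not_lt] at hi; omega)]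
  have h3 : (∑ i ∈ range m, if i + 1 ≤ m then θ * S θ n (m - (i + 1)) else 0)
      = ∑ i ∈ range m, θ * S θ n (m - (i + 1)) :=
    Finset.sum_congr rfl fun i hi => if_pos (by rw [Finset.mem_range] at hi; omega)
  rw [h3, ← Finset.mul_sum]
  congr 1
  rw [← Finset.sum_range_reflect (fun k => S θ n k) m]
  exact Finset.sum_congr rfl fun i hi => by
    rw [Finset.mem_range] at hi; congr 1; omega

lemma S_zero (θ : ℝ) : S θ n 0 = 1 := by
  rw [S, tsum_eq_single (0 : Fin n → ℕ)]
  · simp [Sg, W]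
  · intro c hc
    rw [if_neg]
    intro h
    apply hc
    funext j
    have h1 : (j.1 + 1) * c j = 0 := by
      have h2 := Finset.sum_eq_zero_iff.mp h j (mem_univ j)
      exact h2
    simpa using Nat.mul_eq_zero.mp h1 |>.resolve_left (Nat.succ_ne_zero _)

lemma aux_sum (θ : ℝ) (hθ : 0 < θ) (m : ℕ) :
    θ * ∑ k ∈ range (m + 1), (∏ i ∈ range k, (θ + i)) / (Nat.factorial k)
      = (∏ i ∈ range (m + 1), (θ + i)) / (Nat.factorial m) := by
  induction m with
  | zero => simp
  | succ m ih =>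
    rw [Finset.sum_range_succ, mul_add, ih]
    have hf : ((Nat.factorial m : ℝ)) ≠ 0 := Nat.cast_ne_zero.mpr (Nat.factorial_ne_zero _)
    have hf1 : ((Nat.factorial (m + 1) : ℝ)) ≠ 0 := Nat.cast_ne_zero.mpr (Nat.factorial_ne_zero _)
    rw [prod_range_succ (fun i => θ + (i : ℝ)) (m + 1)]
    rw [Nat.factorial_succ]
    push_cast
    field_simp
    ring

lemma S_eq (θ : ℝ) (hθ : 0 < θ) : ∀ m, m ≤ n →
    S θ n m = (∏ i ∈ range m, (θ + i)) / (Nat.factorial m) := by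
  intro m
  induction m using Nat.strong_induction_on with
  | _ m ih =>
    intro hm
    match m with
    | 0 => simpa using S_zero θ
    | (m + 1) =>
      have h := step θ (m + 1) hm
      rw [Finset.sum_congr rfl (fun k hk => ih k (Finset.mem_range.mp hk)
        (by have := Finset.mem_range.mp hk; omega))] at h
      rw [aux_sum θ hθ m] at h
      have hm1 : ((m : ℝ) + 1) ≠ 0 := by positivity
      have := h
      push_cast at this
      have hfact : ((Nat.factorial (m + 1) : ℝ)) = ((m : ℝ) + 1) * (Nat.factorial m) := by
        rw [Nat.factorial_succ]; push_cast; ring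
      rw [hfact]
      field_simp at this ⊢
      linarith [this]

end ESF

/-- The Ewens Sampling Formula defines a probability distribution: for θ > 0 and n ≥ 1,
the ESF(θ) weights sum to 1 over all allele-count vectors `(c_1, …, c_n)` with
`∑ j·c_j = n`. Here `c : Fin n → ℕ`, with `c j` the number of types represented `j+1` times. -/
theorem esf_sums_to_one (θ : ℝ) (hθ : 0 < θ) (n : ℕ) (hn : 1 ≤ n) :
    ∑' c : Fin n → ℕ,
      (if (∑ j : Fin n, (j.1 + 1) * c j) = n then
        ((Nat.factorial n : ℝ) / ∏ i ∈ range n, (θ + i)) *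
          ∏ j : Fin n, (θ / (j.1 + 1)) ^ c j / (Nat.factorial (c j))
      else 0) = 1 := by
  have hP : (∏ i ∈ range n, (θ + (i : ℝ))) ≠ 0 :=
    ne_of_gt (Finset.prod_pos fun i _ => by positivity)
  have hfact : ((Nat.factorial n : ℝ)) ≠ 0 := Nat.cast_ne_zero.mpr (Nat.factorial_ne_zero _)
  have hS := ESF.S_eq (n := n) θ hθ n le_rfl
  have key : (∑' c : Fin n → ℕ,
      (if (∑ j : Fin n, (j.1 + 1) * c j) = n then
        ((Nat.factorial n : ℝ) / ∏ i ∈ range n, (θ + i)) *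
          ∏ j : Fin n, (θ / (j.1 + 1)) ^ c j / (Nat.factorial (c j))
      else 0))
      = ((Nat.factorial n : ℝ) / ∏ i ∈ range n, (θ + i)) * ESF.S θ n n := by
    rw [ESF.S, ← tsum_mul_left]
    exact tsum_congr fun c => by
      by_cases h : (∑ j : Fin n, (j.1 + 1) * c j) = n <;> simp [ESF.Sg, ESF.W, h]
  rw [key, hS]
  field_simp
end

section
/- In the Chinese Restaurant Process with parameter θ > 0 run for n steps, the probability that the resulting partition has type counts (c_1,...,c_n) (with c_j blocks of size j) equals the Ewens Sampling Formula: (n!/θ_(n)) ∏_{j=1}^n (θ/j)^{c_j}/c_j!. -/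
open Finset

/-- In the Chinese Restaurant Process, each individual `k` either starts a new type
(`ch k = none`) or copies the type of a previously seated individual `i < k`
(`ch k = some i`).  `crpLabel ch k` is the founding individual of `k`'s type. -/
def crpLabel {n : ℕ} (ch : (k : Fin n) → Option (Fin k.1)) : Fin n → Fin n
  | k =>
    match ch k with
    | none => k
    | some i => crpLabel ch ⟨i.1, lt_trans i.2 k.2⟩
  termination_by k => k.1
  decreasing_by exact i.2

/-- The probability of a given sequence of CRP choices: individual `k` starts a new type
with probability `θ/(θ+k)`, and copies any given earlier individual with probability
`1/(θ+k)`. -/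
noncomputable def crpProb (θ : ℝ) {n : ℕ} (ch : (k : Fin n) → Option (Fin k.1)) : ℝ :=
  ∏ k : Fin n, (if ch k = none then θ else 1) / (θ + k.1)

abbrev Ch (n : ℕ) := (k : Fin n) → Option (Fin k.1)

def chExt {n : ℕ} (ch : Ch n) (o : Option (Fin n)) : Ch (n+1) := fun k =>
  if h : k.1 < n then ch ⟨k.1, h⟩
  else o.map (Fin.cast (Nat.le_antisymm (Nat.not_lt.mp h) (Nat.lt_succ_iff.mp k.2)))

lemma chExt_castSucc {n : ℕ} (ch : Ch n) (o : Option (Fin n)) (k : Fin n) :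
    chExt ch o k.castSucc = ch k := by
  show dite _ _ _ = _
  rw [dif_pos (show (Fin.castSucc k).1 < n from k.2)]
  rfl

lemma chExt_last {n : ℕ} (ch : Ch n) (o : Option (Fin n)) :
    chExt ch o (Fin.last n) = o := by
  show dite _ _ _ = _
  rw [dif_neg (by simp)]
  cases o <;> rfl

def chEquiv (n : ℕ) : Ch (n+1) ≃ Ch n × Option (Fin n) where
  toFun ch := (fun k => ch k.castSucc, ch (Fin.last n))
  invFun p := chExt p.1 p.2
  left_inv ch := by
    funext k
    by_cases h : k.1 < n
    · have : k = Fin.castSucc ⟨k.1, h⟩ := by ext; rfl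
      rw [this]; exact chExt_castSucc _ _ _
    · have : k = Fin.last n := by ext; simp; omega
      rw [this]; exact chExt_last _ _
  right_inv p := by
    ext : 1
    · funext k; exact chExt_castSucc _ _ _
    · exact chExt_last _ _

lemma crpLabel_none {n : ℕ} {ch : Ch n} {k : Fin n} (h : ch k = none) : crpLabel ch k = k := by
  rw [crpLabel, h]

lemma crpLabel_some {n : ℕ} {ch : Ch n} {k : Fin n} {i : Fin k.1} (h : ch k = some i) :
    crpLabel ch k = crpLabel ch ⟨i.1, lt_trans i.2 k.2⟩ := by
  rw [crpLabel, h]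

lemma label_ext_castSucc {n : ℕ} (ch : Ch n) (o : Option (Fin n)) (k : Fin n) :
    crpLabel (chExt ch o) k.castSucc = (crpLabel ch k).castSucc := by
  cases h : ch k with
  | none =>
    rw [crpLabel_none h, crpLabel_none (show chExt ch o k.castSucc = none by rw [chExt_castSucc, h])]
  | some i =>
    have h2 : chExt ch o k.castSucc = some i := by rw [chExt_castSucc]; exact h
    rw [crpLabel_some h2, crpLabel_some h]
    exact label_ext_castSucc ch o ⟨i.1, lt_trans i.2 k.2⟩
  termination_by k.1
  decreasing_by exact i.2

lemma label_ext_last_none {n : ℕ} (ch : Ch n) :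
    crpLabel (chExt ch none) (Fin.last n) = Fin.last n :=
  crpLabel_none (chExt_last ch none)

lemma label_ext_last_some {n : ℕ} (ch : Ch n) (i : Fin n) :
    crpLabel (chExt ch (some i)) (Fin.last n) = (crpLabel ch i).castSucc := by
  have h : chExt ch (some i) (Fin.last n) = some i := chExt_last ch (some i)
  rw [crpLabel_some h]
  exact label_ext_castSucc ch (some i) i

/-- size of the block with label ℓ -/
def bc {n : ℕ} (ch : Ch n) (ℓ : Fin n) : ℕ :=
  (Finset.univ.filter (fun k : Fin n => crpLabel ch k = ℓ)).card

/-- number of blocks of size j -/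
def cnt {n : ℕ} (ch : Ch n) (j : ℕ) : ℕ :=
  (Finset.univ.filter (fun ℓ : Fin n => bc ch ℓ = j)).card

lemma bc_le {n : ℕ} (ch : Ch n) (ℓ : Fin n) : bc ch ℓ ≤ n := by
  classical
  calc bc ch ℓ ≤ (Finset.univ : Finset (Fin n)).card := Finset.card_filter_le _ _
  _ = n := by simp

lemma bc_pos_self {n : ℕ} (ch : Ch n) (i : Fin n) : 0 < bc ch (crpLabel ch i) := by
  rw [bc, Finset.card_pos]
  exact ⟨i, by simp⟩

lemma bc_ext_castSucc {n : ℕ} (ch : Ch n) (o : Option (Fin n)) (ℓ : Fin n) :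
    bc (chExt ch o) ℓ.castSucc
      = bc ch ℓ + (if crpLabel (chExt ch o) (Fin.last n) = ℓ.castSucc then 1 else 0) := by
  classical
  rw [bc, Finset.card_filter, Fin.sum_univ_castSucc]
  congr 1
  rw [bc, Finset.card_filter]
  refine Finset.sum_congr rfl (fun k _ => ?_)
  rw [label_ext_castSucc]
  simp [Fin.castSucc_inj]

lemma bc_ext_last {n : ℕ} (ch : Ch n) (o : Option (Fin n)) :
    bc (chExt ch o) (Fin.last n) = if o = none then 1 else 0 := by
  classical
  rw [bc, Finset.card_filter, Fin.sum_univ_castSucc]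
  have h1 : ∀ k : Fin n, crpLabel (chExt ch o) k.castSucc ≠ Fin.last n := by
    intro k
    rw [label_ext_castSucc]
    exact Fin.ne_of_lt (Fin.castSucc_lt_last _)
  rw [Finset.sum_congr rfl (fun k _ => if_neg (h1 k)), Finset.sum_const_zero, zero_add]
  cases o with
  | none => rw [label_ext_last_none]; simp
  | some i =>
    rw [label_ext_last_some]
    simp [Fin.ne_of_lt (Fin.castSucc_lt_last (crpLabel ch i))]

lemma cnt_ext_none {n : ℕ} (ch : Ch n) (j : ℕ) (hj : 1 ≤ j) :
    cnt (chExt ch none) j = cnt ch j + (if j = 1 then 1 else 0) := by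
  classical
  rw [cnt, Finset.card_filter, Fin.sum_univ_castSucc]
  congr 1
  · rw [cnt, Finset.card_filter]
    refine Finset.sum_congr rfl (fun ℓ _ => ?_)
    rw [bc_ext_castSucc, label_ext_last_none,
      if_neg (Fin.ne_of_gt (Fin.castSucc_lt_last ℓ)), add_zero]
  · rw [bc_ext_last, if_pos rfl]
    by_cases h : j = 1 <;> simp [h, eq_comm]
lemma cnt_ext_some {n : ℕ} (ch : Ch n) (i : Fin n) (j : ℕ) (hj : 1 ≤ j) :
    cnt (chExt ch (some i)) j + (if bc ch (crpLabel ch i) = j then 1 else 0)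
      = cnt ch j + (if bc ch (crpLabel ch i) + 1 = j then 1 else 0) := by
  classical
  set L := crpLabel ch i with hL
  have hlast : bc (chExt ch (some i)) (Fin.last n) = 0 := by
    rw [bc_ext_last]; simp
  have h1 : cnt (chExt ch (some i)) j
      = ∑ ℓ : Fin n, (if bc ch ℓ + (if ℓ = L then 1 else 0) = j then 1 else 0) := by
    rw [cnt, Finset.card_filter, Fin.sum_univ_castSucc, hlast, if_neg (by omega), add_zero]
    refine Finset.sum_congr rfl (fun ℓ _ => ?_)
    rw [bc_ext_castSucc, label_ext_last_some, ← hL]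
    congr 2
    simp [Fin.castSucc_inj, eq_comm]
  have h2 : cnt ch j = ∑ ℓ : Fin n, (if bc ch ℓ = j then 1 else 0) := by
    rw [cnt, Finset.card_filter]
  rw [h1, h2, ← Finset.sum_erase_add _ _ (Finset.mem_univ L),
    ← Finset.sum_erase_add _ (fun ℓ => if bc ch ℓ = j then 1 else 0) (Finset.mem_univ L)]
  have h3 : ∀ ℓ ∈ Finset.univ.erase L,
      (if bc ch ℓ + (if ℓ = L then 1 else 0) = j then 1 else 0)
        = (if bc ch ℓ = j then (1:ℕ) else 0) := by
    intro ℓ hℓ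
    rw [if_neg (Finset.mem_erase.mp hℓ).1, add_zero]
  rw [Finset.sum_congr rfl h3, if_pos rfl]
  omega

lemma crpProb_ext {n : ℕ} (θ : ℝ) (ch : Ch n) (o : Option (Fin n)) :
    crpProb θ (chExt ch o) = crpProb θ ch * ((if o = none then θ else 1) / (θ + n)) := by
  rw [crpProb, Fin.prod_univ_castSucc, crpProb]
  congr 1
  · refine Finset.prod_congr rfl (fun k _ => ?_)
    rw [chExt_castSucc]
    simp
  · rw [chExt_last]
    simp

lemma sizeFiber {n : ℕ} (ch : Ch n) (s : ℕ) :
    (Finset.univ.filter (fun i : Fin n => bc ch (crpLabel ch i) = s)).card = s * cnt ch s := by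
  classical
  rw [Finset.card_eq_sum_card_fiberwise
    (f := crpLabel ch) (t := Finset.univ.filter (fun ℓ => bc ch ℓ = s))
    (fun i hi => by simp only [Finset.mem_coe, Finset.mem_filter, Finset.mem_univ, true_and] at hi ⊢; exact hi)]
  rw [Finset.sum_congr rfl (fun ℓ hℓ => ?_), Finset.sum_const, smul_eq_mul, cnt, mul_comm]
  simp only [Finset.mem_filter, Finset.mem_univ, true_and] at hℓ
  have : Finset.filter (fun i => crpLabel ch i = ℓ)
      (Finset.univ.filter (fun i : Fin n => bc ch (crpLabel ch i) = s))
      = Finset.univ.filter (fun k : Fin n => crpLabel ch k = ℓ) := by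
    ext a
    simp only [Finset.mem_filter, Finset.mem_univ, true_and]
    constructor
    · exact fun h => h.2
    · intro h; exact ⟨by rw [h, hℓ], h⟩
  rw [this]
  exact hℓ

noncomputable def esf (θ : ℝ) (n : ℕ) (c : ℕ → ℕ) : ℝ :=
  ((n.factorial : ℝ) / ∏ i ∈ Finset.range n, (θ + i)) *
    ∏ j ∈ Finset.range n, (θ / (j+1)) ^ (c (j+1)) / (Nat.factorial (c (j+1)))

lemma sum_decomp {n : ℕ} (f : Ch (n+1) → ℝ) :
    ∑ ch : Ch (n+1), f ch
      = ∑ ch' : Ch n, (f (chExt ch' none) + ∑ i : Fin n, f (chExt ch' (some i))) := by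
  rw [← Equiv.sum_comp (chEquiv n).symm f, Fintype.sum_prod_type]
  refine Finset.sum_congr rfl (fun ch' _ => ?_)
  rw [Fintype.sum_option]
  rfl

lemma iff_helper {x y c a b : ℕ} (E : x + a = y + b) : x = c ↔ y + b = c + a := by omega

lemma two_terms {c : ℕ → ℕ} {m a b : ℕ} (ha : a ∈ Finset.range m) (hb : b ∈ Finset.range m)
    (hab : a ≠ b) : a * c a + b * c b ≤ ∑ j ∈ Finset.range m, j * c j := by
  have hs : ({a, b} : Finset ℕ) ⊆ Finset.range m := by
    intro x hx
    simp only [Finset.mem_insert, Finset.mem_singleton] at hx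
    rcases hx with h | h <;> subst h <;> assumption
  calc a * c a + b * c b = ∑ j ∈ ({a, b} : Finset ℕ), j * c j := by rw [Finset.sum_pair hab]
  _ ≤ _ := Finset.sum_le_sum_of_subset hs

lemma one_term {c : ℕ → ℕ} {m a : ℕ} (ha : a ∈ Finset.range m) :
    a * c a ≤ ∑ j ∈ Finset.range m, j * c j :=
  Finset.single_le_sum (f := fun j => j * c j) (fun _ _ => Nat.zero_le _) ha

lemma fact_step (x : ℝ) (m : ℕ) :
    x * (x ^ m / (Nat.factorial m)) = (m + 1) * (x ^ (m+1) / (Nat.factorial (m+1))) := by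
  rw [Nat.factorial_succ, pow_succ]
  push_cast
  have h1 : (Nat.factorial m : ℝ) ≠ 0 := Nat.cast_ne_zero.mpr (Nat.factorial_ne_zero m)
  field_simp

lemma prod_ratio_one (θ : ℝ) (n : ℕ) (c c' : ℕ → ℕ) (a : ℕ) (ha : a ∈ Finset.range n)
    (h_other : ∀ j, j ≠ a + 1 → c' j = c j) (h_a : c' (a+1) + 1 = c (a+1)) :
    (θ / (a+1)) * ∏ j ∈ Finset.range n, (θ / (j+1)) ^ (c' (j+1)) / (Nat.factorial (c' (j+1)))
      = (c (a+1) : ℝ) *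
        ∏ j ∈ Finset.range n, (θ / (j+1)) ^ (c (j+1)) / (Nat.factorial (c (j+1))) := by
  rw [← Finset.mul_prod_erase _ (fun j => (θ / (j+1)) ^ (c' (j+1)) / (Nat.factorial (c' (j+1)))) ha,
    ← Finset.mul_prod_erase _ (fun j => (θ / (j+1)) ^ (c (j+1)) / (Nat.factorial (c (j+1)))) ha]
  have hrest : ∏ j ∈ (Finset.range n).erase a,
      (θ / (j+1)) ^ (c' (j+1)) / (Nat.factorial (c' (j+1)))
      = ∏ j ∈ (Finset.range n).erase a,
      (θ / (j+1)) ^ (c (j+1)) / (Nat.factorial (c (j+1))) := by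
    refine Finset.prod_congr rfl (fun j hj => ?_)
    rw [h_other (j+1) (by
      have := (Finset.mem_erase.mp hj).1
      omega)]
  rw [hrest, ← mul_assoc, ← mul_assoc]
  congr 1
  have hfs := fact_step (θ / (a+1)) (c' (a+1))
  rw [hfs, h_a]
  congr 1
  exact_mod_cast congrArg Nat.cast h_a

def dec1 (c : ℕ → ℕ) : ℕ → ℕ := fun j => if j = 1 then c 1 - 1 else c j

def cmv (c : ℕ → ℕ) (t : ℕ) : ℕ → ℕ := fun j =>
  if j = t then c t + 1 else if j = t + 1 then c (t+1) - 1 else c j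

lemma L1 (θ : ℝ) (n : ℕ) (hn : 1 ≤ n) (c : ℕ → ℕ) (h1 : 1 ≤ c 1) :
    θ * ∏ j ∈ Finset.range n, (θ / (j+1)) ^ (dec1 c (j+1)) / (Nat.factorial (dec1 c (j+1)))
      = (c 1 : ℝ) * ∏ j ∈ Finset.range n, (θ / (j+1)) ^ (c (j+1)) / (Nat.factorial (c (j+1))) := by
  have := prod_ratio_one θ n c (dec1 c) 0 (Finset.mem_range.mpr hn)
    (fun j hj => by simp only [dec1, if_neg hj]) (by simp [dec1, Nat.sub_add_cancel h1])
  simpa using this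

lemma L2 (θ : ℝ) (hθ : 0 < θ) (n t : ℕ) (ht1 : 1 ≤ t) (htn : t < n) (c : ℕ → ℕ)
    (h1 : 1 ≤ c (t+1)) :
    ((t * (c t + 1) : ℕ) : ℝ) *
        ∏ j ∈ Finset.range n, (θ / (j+1)) ^ (cmv c t (j+1)) / (Nat.factorial (cmv c t (j+1)))
      = ((( t + 1) * c (t+1) : ℕ) : ℝ) *
        ∏ j ∈ Finset.range n, (θ / (j+1)) ^ (c (j+1)) / (Nat.factorial (c (j+1))) := by
  set d : ℕ → ℕ := fun j => if j = t + 1 then c (t+1) - 1 else c j with hd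
  have hA := prod_ratio_one θ n c d t (Finset.mem_range.mpr htn)
    (fun j hj => by simp only [hd, if_neg hj]) (by simp [hd, Nat.sub_add_cancel h1])
  have hB := prod_ratio_one θ n (cmv c t) d (t-1) (Finset.mem_range.mpr (by omega))
    (fun j hj => by
      simp only [hd, cmv, if_neg (show j ≠ t by omega)])
    (by
      have h1' : t - 1 + 1 = t := by omega
      rw [h1']
      have : d t = c t := by
        simp only [hd]
        rw [if_neg (by omega)]
      rw [this]
      simp [cmv])
  have hcast : ((t - 1 : ℕ) : ℝ) + 1 = (t : ℝ) := by
    rw [Nat.cast_sub ht1]; ring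
  rw [hcast] at hB
  have h1' : t - 1 + 1 = t := by omega
  rw [h1', (show cmv c t t = c t + 1 by simp [cmv])] at hB
  have ht0 : (t : ℝ) ≠ 0 := Nat.cast_ne_zero.mpr (by omega)
  have ht10 : ((t : ℝ) + 1) ≠ 0 := by positivity
  have k1 : ((t:ℝ)+1) * (θ/((t:ℝ)+1)) = θ := by field_simp
  have k2 : (t:ℝ) * (θ/(t:ℝ)) = θ := by field_simp
  push_cast at hA hB ⊢
  calc (t:ℝ) * ((c t:ℝ) + 1) *
        ∏ j ∈ Finset.range n, (θ / (j+1)) ^ (cmv c t (j+1)) / (Nat.factorial (cmv c t (j+1)))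
      = (t:ℝ) * (((c t:ℝ)+1) *
        ∏ j ∈ Finset.range n, (θ / (j+1)) ^ (cmv c t (j+1)) / (Nat.factorial (cmv c t (j+1)))) := by
        ring
    _ = (t:ℝ) * (θ/(t:ℝ) *
        ∏ j ∈ Finset.range n, (θ / (j+1)) ^ (d (j+1)) / (Nat.factorial (d (j+1)))) := by rw [← hB]
    _ = ((t:ℝ) * (θ/(t:ℝ))) *
        ∏ j ∈ Finset.range n, (θ / (j+1)) ^ (d (j+1)) / (Nat.factorial (d (j+1))) := by ring
    _ = (((t:ℝ)+1) * (θ/((t:ℝ)+1))) *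
        ∏ j ∈ Finset.range n, (θ / (j+1)) ^ (d (j+1)) / (Nat.factorial (d (j+1))) := by
        rw [k1, k2]
    _ = ((t:ℝ)+1) * (θ/((t:ℝ)+1) *
        ∏ j ∈ Finset.range n, (θ / (j+1)) ^ (d (j+1)) / (Nat.factorial (d (j+1)))) := by ring
    _ = ((t:ℝ)+1) * ((c (t+1):ℝ) *
        ∏ j ∈ Finset.range n, (θ / (j+1)) ^ (c (j+1)) / (Nat.factorial (c (j+1)))) := by rw [hA]
    _ = ((t:ℝ)+1) * (c (t+1):ℝ) *
        ∏ j ∈ Finset.range n, (θ / (j+1)) ^ (c (j+1)) / (Nat.factorial (c (j+1))) := by ring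

lemma L3 (θ : ℝ) (hθ : 0 < θ) (n : ℕ) (hn : 1 ≤ n) (c : ℕ → ℕ) (h1 : 1 ≤ c (n+1)) :
    ((n * (c n + 1) : ℕ) : ℝ) *
        ∏ j ∈ Finset.range n, (θ / (j+1)) ^ (cmv c n (j+1)) / (Nat.factorial (cmv c n (j+1)))
      = θ * ∏ j ∈ Finset.range n, (θ / (j+1)) ^ (c (j+1)) / (Nat.factorial (c (j+1))) := by
  set d : ℕ → ℕ := fun j => if j = n + 1 then c (n+1) - 1 else c j with hd
  have hdc : ∏ j ∈ Finset.range n, (θ / (j+1)) ^ (d (j+1)) / (Nat.factorial (d (j+1)))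
      = ∏ j ∈ Finset.range n, (θ / (j+1)) ^ (c (j+1)) / (Nat.factorial (c (j+1))) := by
    refine Finset.prod_congr rfl (fun j hj => ?_)
    have hne : j + 1 ≠ n + 1 := by have := Finset.mem_range.mp hj; omega
    simp only [hd, if_neg hne]
  have hB := prod_ratio_one θ n (cmv c n) d (n-1) (Finset.mem_range.mpr (by omega))
    (fun j hj => by
      simp only [hd, cmv, if_neg (show j ≠ n by omega)])
    (by
      have h1' : n - 1 + 1 = n := by omega
      rw [h1']
      have : d n = c n := by
        simp only [hd]
        rw [if_neg (by omega)]
      rw [this]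
      simp [cmv])
  have hcast : ((n - 1 : ℕ) : ℝ) + 1 = (n : ℝ) := by
    rw [Nat.cast_sub hn]; ring
  rw [hcast] at hB
  have h1' : n - 1 + 1 = n := by omega
  rw [h1', (show cmv c n n = c n + 1 by simp [cmv]), hdc] at hB
  have hn0 : (n : ℝ) ≠ 0 := Nat.cast_ne_zero.mpr (by omega)
  have k2 : (n:ℝ) * (θ/(n:ℝ)) = θ := by field_simp
  push_cast at hB ⊢
  calc (n:ℝ) * ((c n:ℝ) + 1) *
        ∏ j ∈ Finset.range n, (θ / (j+1)) ^ (cmv c n (j+1)) / (Nat.factorial (cmv c n (j+1)))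
      = (n:ℝ) * (((c n:ℝ)+1) *
        ∏ j ∈ Finset.range n, (θ / (j+1)) ^ (cmv c n (j+1)) / (Nat.factorial (cmv c n (j+1)))) := by
        ring
    _ = (n:ℝ) * (θ/(n:ℝ) *
        ∏ j ∈ Finset.range n, (θ / (j+1)) ^ (c (j+1)) / (Nat.factorial (c (j+1)))) := by rw [← hB]
    _ = ((n:ℝ) * (θ/(n:ℝ))) *
        ∏ j ∈ Finset.range n, (θ / (j+1)) ^ (c (j+1)) / (Nat.factorial (c (j+1))) := by ring
    _ = θ * ∏ j ∈ Finset.range n, (θ / (j+1)) ^ (c (j+1)) / (Nat.factorial (c (j+1))) := by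
        rw [k2]

lemma fiber_sum {n : ℕ} (ch : Ch n) (g : ℕ → ℝ) :
    ∑ i : Fin n, g (bc ch (crpLabel ch i))
      = ∑ t ∈ Finset.range (n+1), ((t * cnt ch t : ℕ) : ℝ) * g t := by
  classical
  have h1 : ∀ i : Fin n, g (bc ch (crpLabel ch i))
      = ∑ t ∈ Finset.range (n+1), if bc ch (crpLabel ch i) = t then g t else 0 := by
    intro i
    rw [Finset.sum_ite_eq (Finset.range (n+1)) (bc ch (crpLabel ch i)) g,
      if_pos (Finset.mem_range.mpr (Nat.lt_succ_of_le (bc_le ch _)))]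
  rw [Finset.sum_congr rfl (fun i _ => h1 i), Finset.sum_comm]
  refine Finset.sum_congr rfl (fun t _ => ?_)
  rw [← Finset.sum_filter, Finset.sum_const, ← sizeFiber ch t, nsmul_eq_mul]


open scoped Classical in
theorem aux (θ : ℝ) (hθ : 0 < θ) (n : ℕ) : ∀ c : ℕ → ℕ,
    (∑ j ∈ Finset.range (n+1), j * c j = n) → (∀ j, n < j → c j = 0) →
    (∑ ch ∈ Finset.univ.filter (fun ch : Ch n => ∀ j, 1 ≤ j → cnt ch j = c j), crpProb θ ch)
      = esf θ n c := by
  induction n with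
  | zero =>
    intro c hc hc0
    have hP : ∀ ch : Ch 0, ∀ j, 1 ≤ j → cnt ch j = c j := by
      intro ch j hj
      rw [hc0 j hj, cnt]
      simp
    rw [Finset.filter_true_of_mem (fun ch _ => hP ch)]
    have hprob : ∀ ch : Ch 0, crpProb θ ch = 1 := fun ch => by rw [crpProb]; simp
    rw [Finset.sum_congr rfl (fun ch _ => hprob ch), Finset.sum_const, esf]
    simp
  | succ n ih =>
    intro c hc hc0
    rcases Nat.eq_zero_or_pos n with rfl | hn
    · -- level 1 concrete computation
      have hc1 : c 1 = 1 := by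
        rw [Finset.sum_range_succ, Finset.sum_range_one] at hc
        omega
      have hnone : ∀ (ch : Ch 1) (k : Fin 1), ch k = none := by
        intro ch k
        cases h : ch k with
        | none => rfl
        | some i =>
          exfalso
          have : k.1 = 0 := by omega
          exact absurd i.2 (by omega)
      have hbc : ∀ (ch : Ch 1) (ℓ : Fin 1), bc ch ℓ = 1 := by
        intro ch ℓ
        rw [bc, Finset.filter_true_of_mem (fun k _ => ?_), Finset.card_univ]
        · simp
        · rw [crpLabel_none (hnone ch k)]
          exact Subsingleton.elim k ℓ
      have hcnt : ∀ (ch : Ch 1) (j : ℕ), cnt ch j = if j = 1 then 1 else 0 := by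
        intro ch j
        rw [cnt]
        by_cases h : j = 1
        · subst h
          rw [Finset.filter_true_of_mem (fun ℓ _ => hbc ch ℓ), Finset.card_univ]
          simp
        · rw [Finset.filter_false_of_mem (fun ℓ _ => by rw [hbc ch ℓ]; omega)]
          simp [h]
      have hP : ∀ ch : Ch 1, ∀ j, 1 ≤ j → cnt ch j = c j := by
        intro ch j hj
        rw [hcnt]
        rcases Nat.lt_or_ge j 2 with h | h
        · have : j = 1 := by omega
          simp [this, hc1]
        · rw [hc0 j (by omega), if_neg (by omega)]
      have hprob : ∀ ch : Ch 1, crpProb θ ch = 1 := by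
        intro ch
        rw [crpProb, Fin.prod_univ_one, if_pos (hnone ch 0)]
        norm_num
        exact ne_of_gt hθ
      rw [Finset.filter_true_of_mem (fun ch _ => hP ch),
        Finset.sum_congr rfl (fun ch _ => hprob ch), Finset.sum_const, esf]
      rw [Finset.prod_range_one, Finset.prod_range_one, hc1]
      have hcard : (Finset.univ : Finset (Ch 1)).card = 1 := by
        rw [Finset.card_univ]
        rw [Fintype.card_pi]
        simp
      rw [hcard]
      simp
      rw [inv_mul_cancel₀ (ne_of_gt hθ)]
    · classical
      rw [Finset.sum_filter]
      rw [sum_decomp (fun ch => if (∀ j, 1 ≤ j → cnt ch j = c j) then crpProb θ ch else 0)]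
      rw [Finset.sum_add_distrib]
      have hθn : (0:ℝ) < θ + n := by positivity
      have hθn' : (θ + (n:ℝ)) ≠ 0 := ne_of_gt hθn
      have hD : (0:ℝ) < ∏ i ∈ Finset.range n, (θ + i) :=
        Finset.prod_pos (fun i _ => by positivity)
      have hone : ∀ a, a ≤ n+1 → a * c a ≤ n+1 := by
        intro a ha
        rw [← hc]
        exact one_term (Finset.mem_range.mpr (by omega))
      have htwo : ∀ a b, a ≤ n+1 → b ≤ n+1 → a ≠ b → a * c a + b * c b ≤ n+1 := by
        intro a b ha hb hab
        rw [← hc]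
        exact two_terms (Finset.mem_range.mpr (by omega)) (Finset.mem_range.mpr (by omega)) hab
      have hcn1 : c (n+1) ≤ 1 := by
        by_contra h
        have h2 : (n+1) * 2 ≤ (n+1) * c (n+1) := Nat.mul_le_mul_left _ (by omega)
        have h3 := hone (n+1) le_rfl
        generalize (n+1) * c (n+1) = X at h2 h3
        omega
      have cond_none : ∀ ch' : Ch n, (∀ j, 1 ≤ j → cnt (chExt ch' none) j = c j)
          ↔ (∀ j, 1 ≤ j → cnt ch' j + (if j = 1 then 1 else 0) = c j) :=
        fun ch' => forall_congr' fun j => imp_congr_right fun hj => by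
          rw [cnt_ext_none ch' j hj]
      have hT1 : (∑ ch' : Ch n, if (∀ j, 1 ≤ j → cnt (chExt ch' none) j = c j)
            then crpProb θ (chExt ch' none) else 0)
          = (c 1 : ℝ) * (((n.factorial : ℝ) / ∏ i ∈ Finset.range n, (θ + i)) *
              ∏ j ∈ Finset.range n, (θ / (j+1)) ^ (c (j+1)) / (Nat.factorial (c (j+1)))) / (θ + n) := by
        by_cases h1 : c 1 = 0
        · have hfalse : ∀ ch' : Ch n, ¬ (∀ j, 1 ≤ j → cnt (chExt ch' none) j = c j) := by
            intro ch' hP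
            have h2 := (cond_none ch').mp hP 1 le_rfl
            rw [if_pos rfl] at h2
            omega
          rw [Finset.sum_congr rfl (fun ch' _ => if_neg (hfalse ch'))]
          simp [h1]
        · have h1' : 1 ≤ c 1 := by omega
          have hcn0 : c (n+1) = 0 := by
            have h2 := htwo 1 (n+1) (by omega) le_rfl (by omega)
            by_contra h
            have h3 : n+1 ≤ (n+1) * c (n+1) := Nat.le_mul_of_pos_right _ (by omega)
            generalize (n+1) * c (n+1) = X at h2 h3
            omega
          have cond2 : ∀ ch' : Ch n, (∀ j, 1 ≤ j → cnt (chExt ch' none) j = c j)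
              ↔ (∀ j, 1 ≤ j → cnt ch' j = dec1 c j) := by
            intro ch'
            rw [cond_none ch']
            refine forall_congr' fun j => imp_congr_right fun hj => ?_
            by_cases hj1 : j = 1
            · subst hj1
              simp [dec1]
              omega
            · simp [dec1, hj1]
          have hkey : ∀ j ∈ Finset.range (n+1+1),
              j * c j = j * dec1 c j + (if j = 1 then 1 else 0) := by
            intro j _
            by_cases hj1 : j = 1
            · subst hj1
              simp [dec1]
              omega
            · simp [dec1, hj1]
          have hsum2 : ∑ j ∈ Finset.range (n+1+1), j * dec1 c j + 1 = n + 1 := by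
            have e := Finset.sum_congr rfl hkey
            rw [Finset.sum_add_distrib,
              Finset.sum_ite_eq' (Finset.range (n+1+1)) 1 (fun _ => 1),
              if_pos (Finset.mem_range.mpr (by omega))] at e
            omega
          have hdtop : dec1 c (n+1) = 0 := by
            simp only [dec1, if_neg (show n+1 ≠ 1 by omega)]
            exact hcn0
          have hsum : ∑ j ∈ Finset.range (n+1), j * dec1 c j = n := by
            have e := Finset.sum_range_succ (fun j => j * dec1 c j) (n+1)
            rw [hdtop, Nat.mul_zero] at e
            omega
          have hzero : ∀ j, n < j → dec1 c j = 0 := by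
            intro j hj
            by_cases hj1 : j = n+1
            · subst hj1; exact hdtop
            · simp only [dec1, if_neg (show j ≠ 1 by omega)]
              exact hc0 j (by omega)
          have hih := ih (dec1 c) hsum hzero
          have hval : ∀ ch' : Ch n, crpProb θ (chExt ch' none) = crpProb θ ch' * (θ / (θ + n)) := by
            intro ch'
            rw [crpProb_ext]
            norm_num
          have step : ∀ ch' : Ch n,
              (if (∀ j, 1 ≤ j → cnt (chExt ch' none) j = c j)
                then crpProb θ (chExt ch' none) else 0)
              = (if (∀ j, 1 ≤ j → cnt ch' j = dec1 c j) then crpProb θ ch' else 0) * (θ / (θ + n)) := by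
            intro ch'
            rw [if_congr (cond2 ch') (hval ch') rfl, ite_mul, zero_mul]
          rw [Finset.sum_congr rfl (fun ch' _ => step ch'), ← Finset.sum_mul, ← Finset.sum_filter,
            hih, esf]
          rw [show (((n.factorial : ℝ) / ∏ i ∈ Finset.range n, (θ + i)) *
              ∏ j ∈ Finset.range n, (θ / (j+1)) ^ (dec1 c (j+1)) / (Nat.factorial (dec1 c (j+1))))
                * (θ / (θ + n))
              = ((n.factorial : ℝ) / ∏ i ∈ Finset.range n, (θ + i)) *
                (θ * ∏ j ∈ Finset.range n, (θ / (j+1)) ^ (dec1 c (j+1)) / (Nat.factorial (dec1 c (j+1))))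
                / (θ + n) by ring]
          rw [L1 θ n hn c h1']
          ring
      rw [hT1]
      have cond_some : ∀ (ch' : Ch n) (i : Fin n),
          (∀ j, 1 ≤ j → cnt (chExt ch' (some i)) j = c j)
          ↔ (∀ j, 1 ≤ j → cnt ch' j + (if bc ch' (crpLabel ch' i) + 1 = j then 1 else 0)
              = c j + (if bc ch' (crpLabel ch' i) = j then 1 else 0)) := by
        intro ch' i
        refine forall_congr' fun j => imp_congr_right fun hj => ?_
        exact iff_helper (cnt_ext_some ch' i j hj)
      have hvs : ∀ (ch' : Ch n) (i : Fin n),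
          crpProb θ (chExt ch' (some i)) = crpProb θ ch' / (θ + n) := by
        intro ch' i
        rw [crpProb_ext, if_neg (by simp), mul_one_div]
      have hT2 : (∑ ch' : Ch n, ∑ i : Fin n,
            if (∀ j, 1 ≤ j → cnt (chExt ch' (some i)) j = c j)
              then crpProb θ (chExt ch' (some i)) else 0)
          = ∑ t ∈ Finset.range (n+1),
              (if t = 0 ∨ c (t+1) = 0 then 0
                else ((t * (c t + 1) : ℕ) : ℝ) * esf θ n (cmv c t) / (θ + n)) := by
        have step1 : ∀ ch' : Ch n, (∑ i : Fin n,
            if (∀ j, 1 ≤ j → cnt (chExt ch' (some i)) j = c j)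
              then crpProb θ (chExt ch' (some i)) else 0)
            = ∑ t ∈ Finset.range (n+1), ((t * cnt ch' t : ℕ) : ℝ) *
                (if (∀ j, 1 ≤ j → cnt ch' j + (if t + 1 = j then 1 else 0)
                    = c j + (if t = j then 1 else 0))
                  then crpProb θ ch' / (θ + n) else 0) := by
          intro ch'
          rw [Finset.sum_congr rfl (fun i _ => if_congr (cond_some ch' i) (hvs ch' i) rfl)]
          exact fiber_sum ch' (fun t => if (∀ j, 1 ≤ j → cnt ch' j + (if t + 1 = j then 1 else 0)
                    = c j + (if t = j then 1 else 0)) then crpProb θ ch' / (θ + n) else 0)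
        rw [Finset.sum_congr rfl (fun ch' _ => step1 ch'), Finset.sum_comm]
        refine Finset.sum_congr rfl (fun t ht => ?_)
        by_cases ht0 : t = 0
        · subst ht0
          rw [if_pos (Or.inl rfl)]
          refine Finset.sum_eq_zero (fun ch' _ => ?_)
          norm_num
        by_cases hct : c (t+1) = 0
        · rw [if_pos (Or.inr hct)]
          refine Finset.sum_eq_zero (fun ch' _ => ?_)
          have hQfalse : ¬ (∀ j, 1 ≤ j → cnt ch' j + (if t + 1 = j then 1 else 0)
              = c j + (if t = j then 1 else 0)) := by
            intro hQ
            have h2 := hQ (t+1) (by omega)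
            rw [if_pos rfl, if_neg (by omega)] at h2
            omega
          rw [if_neg hQfalse, mul_zero]
        · rw [if_neg (by tauto)]
          have ht1 : 1 ≤ t := by omega
          have htn : t ≤ n := by have := Finset.mem_range.mp ht; omega
          have hmul : ∀ ch' : Ch n, ((t * cnt ch' t : ℕ) : ℝ) *
              (if (∀ j, 1 ≤ j → cnt ch' j + (if t + 1 = j then 1 else 0)
                  = c j + (if t = j then 1 else 0))
                then crpProb θ ch' / (θ + n) else 0)
              = ((t * (c t + 1) : ℕ) : ℝ) *
                ((if (∀ j, 1 ≤ j → cnt ch' j + (if t + 1 = j then 1 else 0)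
                    = c j + (if t = j then 1 else 0))
                  then crpProb θ ch' else 0) / (θ + n)) := by
            intro ch'
            by_cases hQ : (∀ j, 1 ≤ j → cnt ch' j + (if t + 1 = j then 1 else 0)
                  = c j + (if t = j then 1 else 0))
            · rw [if_pos hQ, if_pos hQ]
              have h2 := hQ t (by omega)
              rw [if_neg (by omega), if_pos rfl] at h2
              have hcnt : cnt ch' t = c t + 1 := by omega
              rw [hcnt]
            · rw [if_neg hQ, if_neg hQ, mul_zero, zero_div, mul_zero]
          rw [Finset.sum_congr rfl (fun ch' _ => hmul ch'), ← Finset.mul_sum,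
            ← Finset.sum_div, ← Finset.sum_filter]
          have hcond : ∀ ch' : Ch n, (∀ j, 1 ≤ j → cnt ch' j + (if t + 1 = j then 1 else 0)
              = c j + (if t = j then 1 else 0)) ↔ (∀ j, 1 ≤ j → cnt ch' j = cmv c t j) := by
            intro ch'
            refine forall_congr' fun j => imp_congr_right fun hj => ?_
            by_cases hjt : j = t
            · subst hjt
              rw [if_neg (by omega), if_pos rfl,
                (show cmv c j j = c j + 1 by simp [cmv])]
              omega
            by_cases hjt1 : j = t+1
            · subst hjt1
              rw [if_pos rfl, if_neg (by omega),
                (show cmv c t (t+1) = c (t+1) - 1 by simp [cmv])]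
              omega
            · rw [if_neg (by omega), if_neg (by omega),
                (show cmv c t j = c j by simp only [cmv, if_neg hjt, if_neg hjt1])]
              omega
          rw [Finset.filter_congr (fun ch' _ => hcond ch')]
          have hcmvtop : cmv c t (n+1) = 0 := by
            by_cases htn' : t = n
            · rw [(show cmv c t (n+1) = c (t+1) - 1 by
                simp only [cmv]
                rw [if_neg (show n+1 ≠ t by omega), if_pos (show n+1 = t+1 by omega)]),
                (show t+1 = n+1 by omega)]
              omega
            · have h2 := htwo (t+1) (n+1) (by omega) le_rfl (by omega)
              have h3 : t+1 ≤ (t+1) * c (t+1) := Nat.le_mul_of_pos_right _ (by omega)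
              simp only [cmv, if_neg (show n+1 ≠ t by omega),
                if_neg (show n+1 ≠ t+1 by omega)]
              by_contra h
              have h4 : n+1 ≤ (n+1) * c (n+1) := Nat.le_mul_of_pos_right _ (by omega)
              generalize (t+1) * c (t+1) = X at h2 h3
              generalize (n+1) * c (n+1) = Y at h2 h4
              omega
          have hkey2 : ∀ j ∈ Finset.range (n+1+1),
              j * cmv c t j + (if j = t+1 then t+1 else 0)
                = j * c j + (if j = t then t else 0) := by
            intro j _
            by_cases hjt : j = t
            · subst hjt
              rw [if_neg (by omega), if_pos rfl,
                (show cmv c j j = c j + 1 by simp [cmv])]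
              ring
            by_cases hjt1 : j = t+1
            · subst hjt1
              rw [if_pos rfl, if_neg (by omega),
                (show cmv c t (t+1) = c (t+1) - 1 by simp [cmv])]
              obtain ⟨m, hm⟩ : ∃ m, c (t+1) = m + 1 := ⟨c (t+1) - 1, by omega⟩
              rw [hm]
              simp only [Nat.add_sub_cancel]
              ring
            · rw [if_neg hjt1, if_neg hjt,
                (show cmv c t j = c j by simp only [cmv, if_neg hjt, if_neg hjt1])]
          have hsum2t : ∑ j ∈ Finset.range (n+1+1), j * cmv c t j + (t+1) = (n+1) + t := by
            have e := Finset.sum_congr rfl hkey2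
            rw [Finset.sum_add_distrib, Finset.sum_add_distrib,
              Finset.sum_ite_eq' (Finset.range (n+1+1)) (t+1) (fun _ => t+1),
              Finset.sum_ite_eq' (Finset.range (n+1+1)) t (fun _ => t),
              if_pos (Finset.mem_range.mpr (by omega)),
              if_pos (Finset.mem_range.mpr (by omega))] at e
            omega
          have hsumt : ∑ j ∈ Finset.range (n+1), j * cmv c t j = n := by
            have e := Finset.sum_range_succ (fun j => j * cmv c t j) (n+1)
            rw [hcmvtop, Nat.mul_zero] at e
            omega
          have hzerot : ∀ j, n < j → cmv c t j = 0 := by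
            intro j hj
            by_cases hj1 : j = n+1
            · subst hj1; exact hcmvtop
            · simp only [cmv, if_neg (show j ≠ t by omega), if_neg (show j ≠ t+1 by omega)]
              exact hc0 j (by omega)
          rw [ih (cmv c t) hsumt hzerot, mul_div_assoc]
      rw [hT2]
      by_cases hA : c (n+1) = 0
      · -- case c (n+1) = 0
        have hW : ∀ t ∈ Finset.range (n+1),
            (if t = 0 ∨ c (t+1) = 0 then (0:ℝ)
              else ((t * (c t + 1) : ℕ) : ℝ) * esf θ n (cmv c t) / (θ + n))
            = (if t = 0 then 0 else (((t+1) * c (t+1) : ℕ) : ℝ) *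
                (((n.factorial : ℝ) / ∏ i ∈ Finset.range n, (θ + i)) *
                  ∏ j ∈ Finset.range n, (θ / (j+1)) ^ (c (j+1)) / (Nat.factorial (c (j+1))))
                  / (θ + n)) := by
          intro t ht
          by_cases ht0 : t = 0
          · simp [ht0]
          rw [if_neg ht0]
          by_cases hct : c (t+1) = 0
          · rw [if_pos (Or.inr hct), hct]
            simp
          rw [if_neg (by tauto)]
          have htn : t < n := by
            have h2 := Finset.mem_range.mp ht
            by_contra h
            have hteq : t = n := by omega
            rw [hteq] at hct
            exact hct hA
          rw [esf]
          rw [show ((t * (c t + 1) : ℕ) : ℝ) *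
              (((n.factorial : ℝ) / ∏ i ∈ Finset.range n, (θ + i)) *
                ∏ j ∈ Finset.range n, (θ / (j+1)) ^ (cmv c t (j+1)) / (Nat.factorial (cmv c t (j+1))))
                / (θ + n)
              = ((n.factorial : ℝ) / ∏ i ∈ Finset.range n, (θ + i)) *
                (((t * (c t + 1) : ℕ) : ℝ) *
                ∏ j ∈ Finset.range n, (θ / (j+1)) ^ (cmv c t (j+1)) / (Nat.factorial (cmv c t (j+1))))
                / (θ + n) by ring]
          rw [L2 θ hθ n t (by omega) htn c (by omega)]
          ring
        rw [Finset.sum_congr rfl hW, Finset.sum_range_succ', if_pos rfl, add_zero]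
        rw [Finset.sum_congr rfl (fun i (hi : i ∈ Finset.range n) => if_neg (Nat.succ_ne_zero i))]
        have hnum : c 1 + ∑ i ∈ Finset.range n, (i+1+1) * c (i+1+1) = n+1 := by
          have e1 := Finset.sum_range_succ' (fun j => j * c j) (n+1)
          have e2 := Finset.sum_range_succ' (fun i => (i+1) * c (i+1)) n
          rw [e2] at e1
          rw [hc] at e1
          simp only [Nat.zero_add, Nat.zero_mul, Nat.add_zero] at e1
          omega
        have hstep : ∀ i ∈ Finset.range n,
            (((i+1+1) * c (i+1+1) : ℕ) : ℝ) *
              (((n.factorial : ℝ) / ∏ i ∈ Finset.range n, (θ + i)) *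
                ∏ j ∈ Finset.range n, (θ / (j+1)) ^ (c (j+1)) / (Nat.factorial (c (j+1))))
                / (θ + n)
            = (((i+1+1) * c (i+1+1) : ℕ) : ℝ) *
              ((((n.factorial : ℝ) / ∏ i ∈ Finset.range n, (θ + i)) *
                ∏ j ∈ Finset.range n, (θ / (j+1)) ^ (c (j+1)) / (Nat.factorial (c (j+1))))
                / (θ + n)) := fun i _ => mul_div_assoc _ _ _
        rw [Finset.sum_congr rfl hstep, ← Finset.sum_mul, ← Nat.cast_sum, mul_div_assoc,
          ← add_mul, ← Nat.cast_add, hnum]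
        rw [esf, Finset.prod_range_succ (fun i => θ + (i:ℕ)) n,
          Finset.prod_range_succ (fun j => (θ/((j:ℕ)+1))^(c (j+1))/(Nat.factorial (c (j+1)))) n,
          hA, pow_zero, Nat.factorial_zero, Nat.factorial_succ]
        push_cast
        have hDne : (∏ i ∈ Finset.range n, (θ + (i:ℝ))) ≠ 0 := ne_of_gt hD
        field_simp
      · -- case c (n+1) = 1
        have hcB : c (n+1) = 1 := by omega
        have hc1 : c 1 = 0 := by
          have h2 := htwo 1 (n+1) (by omega) le_rfl (by omega)
          rw [hcB, Nat.mul_one, Nat.one_mul] at h2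
          omega
        have hmid : ∀ t, 1 ≤ t → t < n → c (t+1) = 0 := by
          intro t ht1 htn
          have h2 := htwo (t+1) (n+1) (by omega) le_rfl (by omega)
          rw [hcB, Nat.mul_one] at h2
          by_contra h
          have h3 : t+1 ≤ (t+1) * c (t+1) := Nat.le_mul_of_pos_right _ (by omega)
          generalize (t+1) * c (t+1) = X at h2 h3
          omega
        rw [Finset.sum_range_succ]
        rw [Finset.sum_eq_zero (fun t ht => ?_)]
        swap
        · by_cases ht0 : t = 0
          · rw [if_pos (Or.inl ht0)]
          · rw [if_pos (Or.inr (hmid t (by omega) (Finset.mem_range.mp ht)))]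
        rw [zero_add, if_neg (by push_neg; exact ⟨by omega, by omega⟩), hc1]
        rw [esf]
        rw [show ((n * (c n + 1) : ℕ) : ℝ) *
            (((n.factorial : ℝ) / ∏ i ∈ Finset.range n, (θ + i)) *
              ∏ j ∈ Finset.range n, (θ / (j+1)) ^ (cmv c n (j+1)) / (Nat.factorial (cmv c n (j+1))))
              / (θ + n)
            = ((n.factorial : ℝ) / ∏ i ∈ Finset.range n, (θ + i)) *
              (((n * (c n + 1) : ℕ) : ℝ) *
              ∏ j ∈ Finset.range n, (θ / (j+1)) ^ (cmv c n (j+1)) / (Nat.factorial (cmv c n (j+1))))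
              / (θ + n) by ring]
        rw [L3 θ hθ n hn c (by omega)]
        rw [esf, Finset.prod_range_succ (fun i => θ + (i:ℕ)) n,
          Finset.prod_range_succ (fun j => (θ/((j:ℕ)+1))^(c (j+1))/(Nat.factorial (c (j+1)))) n,
          hcB, pow_one, Nat.factorial_one, Nat.factorial_succ]
        push_cast
        have hDne : (∏ i ∈ Finset.range n, (θ + (i:ℝ))) ≠ 0 := ne_of_gt hD
        have hn1 : ((n:ℝ) + 1) ≠ 0 := by positivity
        field_simp
        ring

/-- The Chinese Restaurant Process with parameter θ > 0 run for n steps produces a random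
partition whose type counts `(c_1, …, c_n)` follow the Ewens Sampling Formula:
the total probability of all choice sequences with `c j` types of size `j` equals
`(n!/θ_(n)) ∏_j (θ/j)^{c_j}/c_j!`. -/
theorem crp_gives_esf (θ : ℝ) (hθ : 0 < θ) (n : ℕ) (hn : 1 ≤ n) (c : Fin n → ℕ)
    (hc : (∑ j : Fin n, (j.1 + 1) * c j) = n) :
    ∑ ch ∈ Finset.univ.filter
        (fun ch : (k : Fin n) → Option (Fin k.1) =>
          ∀ j : Fin n,
            (Finset.univ.filter (fun ℓ : Fin n =>
              (Finset.univ.filter (fun k : Fin n => crpLabel ch k = ℓ)).card = j.1 + 1)).card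
              = c j),
      crpProb θ ch
      = ((Nat.factorial n : ℝ) / ∏ i ∈ range n, (θ + i)) *
          ∏ j : Fin n, (θ / (j.1 + 1)) ^ c j / (Nat.factorial (c j)) := by
  classical
  set c' : ℕ → ℕ := fun j => if h : 1 ≤ j ∧ j ≤ n then c ⟨j-1, by omega⟩ else 0 with hc'def
  have hcc : ∀ j : Fin n, c' (j.1+1) = c j := by
    intro j
    rw [hc'def]
    simp only []
    rw [dif_pos ⟨by omega, by omega⟩]
    exact congrArg c (Fin.ext (show j.1+1-1 = j.1 by omega))
  have hzero : ∀ j, n < j → c' j = 0 := by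
    intro j hj
    rw [hc'def]
    simp only []
    rw [dif_neg (by omega)]
  have hsum : ∑ j ∈ Finset.range (n+1), j * c' j = n := by
    have e1 := Finset.sum_range_succ' (fun j => j * c' j) n
    have e2 : ∑ i ∈ Finset.range n, (i+1) * c' (i+1) = ∑ j : Fin n, (j.1+1) * c j := by
      rw [← Fin.sum_univ_eq_sum_range (fun i => (i+1) * c' (i+1)) n]
      exact Finset.sum_congr rfl (fun j _ => by rw [hcc j])
    rw [e2, hc] at e1
    simpa using e1
  have hiff : ∀ ch : (k : Fin n) → Option (Fin k.1),
      (∀ j : Fin n,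
          (Finset.univ.filter (fun ℓ : Fin n =>
            (Finset.univ.filter (fun k : Fin n => crpLabel ch k = ℓ)).card = j.1 + 1)).card
            = c j)
      ↔ (∀ j, 1 ≤ j → cnt ch j = c' j) := by
    intro ch
    constructor
    · intro h j hj
      by_cases hjn : j ≤ n
      · set jf : Fin n := ⟨j-1, by omega⟩ with hjf
        have h3 : jf.1 + 1 = j := by
          show j - 1 + 1 = j
          omega
        rw [← h3, hcc jf]
        exact h jf
      · rw [hzero j (by omega), cnt, Finset.card_eq_zero]
        rw [Finset.filter_false_of_mem (fun ℓ _ => by have := bc_le ch ℓ; omega)]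
    · intro h j
      have h2 := h (j.1+1) (by omega)
      rw [hcc j] at h2
      exact h2
  rw [Finset.filter_congr (fun ch _ => hiff ch)]
  rw [aux θ hθ n c' hsum hzero, esf]
  congr 1
  rw [← Fin.prod_univ_eq_prod_range
    (fun i => (θ/((i:ℕ)+1):ℝ)^(c' (i+1))/(Nat.factorial (c' (i+1)))) n]
  exact Finset.prod_congr rfl (fun j _ => by rw [hcc j])
end

section
/- Watterson's conditioning representation: if Z_1,...,Z_n are independent with Z_j ~ Poisson(θ/j), then the conditional distribution of (Z_1,...,Z_n) given ∑_{j=1}^n j·Z_j = n equals the Ewens Sampling Formula ESF(θ): P[Z = c | ∑ j Z_j = n] = (n!/θ_(n)) ∏_{j=1}^n (θ/j)^{c_j}/c_j! for all c with ∑ j c_j = n. -/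
open Finset Real

namespace WattersonAux

variable (θ : ℝ) {n : ℕ}

/-- weight of a configuration -/
noncomputable def w (z : Fin n → ℕ) : ℝ :=
  ∏ j : Fin n, (θ / (j.1 + 1)) ^ z j / (Nat.factorial (z j))

/-- configurations with `∑ (j+1) z_j = m` -/
def S (n m : ℕ) : Finset (Fin n → ℕ) :=
  (Fintype.piFinset fun _ : Fin n => Finset.range (m + 1)).filter
    fun z => ∑ j : Fin n, (j.1 + 1) * z j = m

lemma mem_S {n m : ℕ} {z : Fin n → ℕ} : z ∈ S n m ↔ ∑ j : Fin n, (j.1 + 1) * z j = m := by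
  constructor
  · intro h; exact (Finset.mem_filter.mp h).2
  · intro h
    refine Finset.mem_filter.mpr ⟨Fintype.mem_piFinset.mpr fun i => ?_, h⟩
    rw [Finset.mem_range, Nat.lt_succ_iff]
    calc z i ≤ (i.1 + 1) * z i := Nat.le_mul_of_pos_left _ (Nat.succ_pos _)
    _ ≤ ∑ j : Fin n, (j.1 + 1) * z j :=
        Finset.single_le_sum (f := fun j : Fin n => (j.1 + 1) * z j)
          (fun j _ => Nat.zero_le _) (Finset.mem_univ i)
    _ = m := h

lemma term_le {n m : ℕ} {z : Fin n → ℕ} (hz : z ∈ S n m) (j : Fin n) :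
    (j.1 + 1) * z j ≤ m := by
  rw [← mem_S.mp hz]
  exact Finset.single_le_sum (f := fun i : Fin n => (i.1 + 1) * z i)
    (fun i _ => Nat.zero_le _) (Finset.mem_univ j)

/-- the partial sums -/
noncomputable def A (n m : ℕ) : ℝ := ∑ z ∈ S n m, w θ z

lemma A_zero (n : ℕ) : A θ n 0 = 1 := by
  have hS : S n 0 = {fun _ => 0} := by
    ext z
    simp only [mem_S, Finset.mem_singleton]
    constructor
    · intro h
      funext j
      have := (Finset.sum_eq_zero_iff.mp h) j (Finset.mem_univ j)
      exact (Nat.mul_eq_zero.mp this).resolve_left (Nat.succ_ne_zero _)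
    · intro h; subst h; simp
  rw [A, hS, Finset.sum_singleton, w]
  simp

lemma sum_update_mul (y : Fin n → ℕ) (j : Fin n) (v : ℕ) :
    ∑ i : Fin n, (i.1 + 1) * (Function.update y j v) i + (j.1 + 1) * y j
      = ∑ i : Fin n, (i.1 + 1) * y i + (j.1 + 1) * v := by
  have h1 : ∑ i ∈ Finset.univ.erase j, (i.1 + 1) * (Function.update y j v) i + (j.1 + 1) * v
      = ∑ i : Fin n, (i.1 + 1) * (Function.update y j v) i := by
    simpa using Finset.sum_erase_add Finset.univ
      (fun i : Fin n => (i.1 + 1) * (Function.update y j v) i) (Finset.mem_univ j)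
  have h2 : ∑ i ∈ Finset.univ.erase j, (i.1 + 1) * y i + (j.1 + 1) * y j
      = ∑ i : Fin n, (i.1 + 1) * y i := by
    simpa using Finset.sum_erase_add Finset.univ
      (fun i : Fin n => (i.1 + 1) * y i) (Finset.mem_univ j)
  have h3 : ∑ i ∈ Finset.univ.erase j, (i.1 + 1) * (Function.update y j v) i
      = ∑ i ∈ Finset.univ.erase j, (i.1 + 1) * y i := by
    refine Finset.sum_congr rfl fun i hi => ?_
    rw [Function.update_of_ne (Finset.ne_of_mem_erase hi)]
  omega

lemma w_update (y : Fin n → ℕ) (j : Fin n) :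
    w θ (Function.update y j (y j + 1)) * ((y j : ℝ) + 1)
      = w θ y * (θ / (j.1 + 1)) := by
  rw [w, w, ← Finset.prod_erase_mul _ _ (Finset.mem_univ j),
    ← Finset.prod_erase_mul _ _ (Finset.mem_univ j)]
  have h3 : ∏ i ∈ Finset.univ.erase j,
        (θ / (i.1 + 1)) ^ (Function.update y j (y j + 1)) i
          / (Nat.factorial ((Function.update y j (y j + 1)) i))
      = ∏ i ∈ Finset.univ.erase j, (θ / (i.1 + 1)) ^ y i / (Nat.factorial (y i)) := by
    refine Finset.prod_congr rfl fun i hi => ?_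
    rw [Function.update_of_ne (Finset.ne_of_mem_erase hi)]
  rw [h3, Function.update_self, pow_succ, Nat.factorial_succ]
  have hy : ((y j : ℝ) + 1) ≠ 0 := by positivity
  have hf : ((Nat.factorial (y j) : ℝ)) ≠ 0 := Nat.cast_ne_zero.mpr (Nat.factorial_ne_zero _)
  push_cast
  field_simp

lemma shift_lemma (m : ℕ) (j : Fin n) (hj : j.1 + 1 ≤ m) :
    ∑ z ∈ S n m, (z j : ℝ) * w θ z = (θ / (j.1 + 1)) * A θ n (m - (j.1 + 1)) := by
  classical
  have hfil : ∑ z ∈ (S n m).filter (fun z => z j ≠ 0), (z j : ℝ) * w θ z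
      = ∑ z ∈ S n m, (z j : ℝ) * w θ z := by
    refine Finset.sum_filter_of_ne fun z _ hz => ?_
    intro h0
    rw [h0] at hz; simp at hz
  rw [← hfil, A, Finset.mul_sum]
  refine Finset.sum_nbij' (fun z => Function.update z j (z j - 1))
    (fun y => Function.update y j (y j + 1)) ?_ ?_ ?_ ?_ ?_
  · -- forward membership
    intro z hz
    obtain ⟨hz1, hz2⟩ := Finset.mem_filter.mp hz
    have hz' := mem_S.mp hz1
    have hz0 : 1 ≤ z j := Nat.one_le_iff_ne_zero.mpr hz2
    have hle := term_le hz1 j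
    have hsu := sum_update_mul z j (z j - 1)
    refine mem_S.mpr ?_
    show ∑ i : Fin n, (i.1 + 1) * (Function.update z j (z j - 1)) i = m - (j.1 + 1)
    have hmul : (j.1 + 1) * (z j - 1) + (j.1 + 1) = (j.1 + 1) * z j := by
      rw [← Nat.mul_succ]; congr 1; omega
    omega
  · -- backward membership
    intro y hy
    have hy' := mem_S.mp hy
    have hsu := sum_update_mul y j (y j + 1)
    have hmul : (j.1 + 1) * (y j + 1) = (j.1 + 1) * y j + (j.1 + 1) := Nat.mul_succ _ _
    refine Finset.mem_filter.mpr ⟨mem_S.mpr ?_, by simp⟩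
    show ∑ i : Fin n, (i.1 + 1) * (Function.update y j (y j + 1)) i = m
    omega
  · -- left inverse
    intro z hz
    obtain ⟨_, hz2⟩ := Finset.mem_filter.mp hz
    show Function.update _ j _ = z
    funext i
    by_cases hi : i = j
    · subst hi; simp; omega
    · simp [Function.update_of_ne hi]
  · -- right inverse
    intro y _
    show Function.update _ j _ = y
    funext i
    by_cases hi : i = j
    · subst hi; simp
    · simp [Function.update_of_ne hi]
  · -- values
    intro z hz
    obtain ⟨_, hz2⟩ := Finset.mem_filter.mp hz
    have hz0 : 1 ≤ z j := Nat.one_le_iff_ne_zero.mpr hz2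
    show (z j : ℝ) * w θ z = (θ / (j.1 + 1)) * w θ (Function.update z j (z j - 1))
    set y := Function.update z j (z j - 1) with hy
    have hupd : Function.update y j (y j + 1) = z := by
      funext i
      by_cases hi : i = j
      · subst hi; simp [hy]; omega
      · simp [hy, Function.update_of_ne hi]
    have hval : y j + 1 = z j := by simp [hy]; omega
    have hw := w_update θ y j
    rw [hupd] at hw
    have hvalR : ((y j : ℝ) + 1) = (z j : ℝ) := by
      rw [← hval]; push_cast; ring
    rw [hvalR] at hw
    linear_combination hw

lemma zero_lemma (m : ℕ) (j : Fin n) (hj : m < j.1 + 1) :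
    ∑ z ∈ S n m, (z j : ℝ) * w θ z = 0 := by
  refine Finset.sum_eq_zero fun z hz => ?_
  have hle := term_le hz j
  have : z j = 0 := by
    by_contra h0
    have h1 : 1 ≤ z j := Nat.one_le_iff_ne_zero.mpr h0
    have := Nat.le_mul_of_pos_right (j.1 + 1) h1
    omega
  rw [this]; simp

lemma A_rec (m : ℕ) (hm : m ≤ n) :
    (m : ℝ) * A θ n m = θ * ∑ k ∈ Finset.range m, A θ n (m - (k + 1)) := by
  classical
  have step1 : (m : ℝ) * A θ n m
      = ∑ j : Fin n, ((j.1 + 1 : ℕ) : ℝ) * ∑ z ∈ S n m, (z j : ℝ) * w θ z := by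
    rw [A, Finset.mul_sum]
    have hterm : ∀ z ∈ S n m, (m : ℝ) * w θ z
        = ∑ j : Fin n, ((j.1 + 1 : ℕ) : ℝ) * ((z j : ℝ) * w θ z) := by
      intro z hz
      have hz' := mem_S.mp hz
      calc (m : ℝ) * w θ z
          = ((∑ j : Fin n, (j.1 + 1) * z j : ℕ) : ℝ) * w θ z := by rw [hz']
        _ = ∑ j : Fin n, ((j.1 + 1 : ℕ) : ℝ) * ((z j : ℝ) * w θ z) := by
            push_cast
            rw [Finset.sum_mul]
            exact Finset.sum_congr rfl fun j _ => by ring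
    rw [Finset.sum_congr rfl hterm, Finset.sum_comm]
    exact Finset.sum_congr rfl fun j _ => (Finset.mul_sum _ _ _).symm
  rw [step1]
  have step2 : ∀ j : Fin n, ((j.1 + 1 : ℕ) : ℝ) * ∑ z ∈ S n m, (z j : ℝ) * w θ z
      = if j.1 < m then θ * A θ n (m - (j.1 + 1)) else 0 := by
    intro j
    by_cases hj : j.1 < m
    · rw [if_pos hj, shift_lemma θ m j hj]
      have h0 : ((j.1 + 1 : ℕ) : ℝ) ≠ 0 := by positivity
      push_cast
      push_cast at h0
      field_simp
    · rw [if_neg hj, zero_lemma θ m j (by omega), mul_zero]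
  rw [Finset.sum_congr rfl (fun j _ => step2 j)]
  rw [Fin.sum_univ_eq_sum_range (fun k => if k < m then θ * A θ n (m - (k + 1)) else 0) n]
  rw [← Finset.sum_subset (Finset.range_subset_range.mpr hm)
    (fun x _ hx => by rw [if_neg]; simpa using hx)]
  rw [Finset.mul_sum]
  refine Finset.sum_congr rfl fun k hk => ?_
  rw [if_pos (Finset.mem_range.mp hk)]

/-- the target value -/
noncomputable def P (θ : ℝ) (m : ℕ) : ℝ :=
  (∏ i ∈ Finset.range m, (θ + i)) / (Nat.factorial m)

lemma P_rec (m : ℕ) : (m : ℝ) * P θ m = θ * ∑ i ∈ Finset.range m, P θ i := by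
  induction m with
  | zero => simp
  | succ m ih =>
    have hsucc : P θ (m + 1) * (m + 1) = P θ m * (θ + m) := by
      rw [P, P, Finset.prod_range_succ, Nat.factorial_succ]
      have h1 : ((Nat.factorial m : ℝ)) ≠ 0 := Nat.cast_ne_zero.mpr (Nat.factorial_ne_zero _)
      have h2 : ((m : ℝ) + 1) ≠ 0 := by positivity
      push_cast
      field_simp
    rw [Finset.sum_range_succ, mul_add]
    push_cast
    nlinarith [hsucc, ih]

lemma A_eq_P (m : ℕ) (hm : m ≤ n) : A θ n m = P θ m := by
  induction m using Nat.strong_induction_on with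
  | _ m ih =>
    match m with
    | 0 => rw [A_zero, P]; simp
    | (m + 1) =>
      have h1 : ((m + 1 : ℕ) : ℝ) * A θ n (m + 1) = ((m + 1 : ℕ) : ℝ) * P θ (m + 1) := by
        rw [A_rec θ (m + 1) hm, P_rec θ (m + 1)]
        congr 1
        have hsum : ∑ k ∈ Finset.range (m + 1), A θ n (m + 1 - (k + 1))
            = ∑ k ∈ Finset.range (m + 1), P θ (m + 1 - (k + 1)) :=
          Finset.sum_congr rfl fun k hk => ih _ (by omega) (by omega)
        rw [hsum]
        have h2 : ∑ k ∈ Finset.range (m + 1), P θ (m + 1 - (k + 1))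
            = ∑ k ∈ Finset.range (m + 1), P θ (m + 1 - 1 - k) :=
          Finset.sum_congr rfl fun k hk => by congr 1; omega
        rw [h2]
        exact Finset.sum_range_reflect (fun i => P θ i) (m + 1)
      have h0 : ((m + 1 : ℕ) : ℝ) ≠ 0 := by positivity
      exact mul_left_cancel₀ h0 h1

lemma P_pos (m : ℕ) (hθ : 0 < θ) : 0 < P θ m := by
  rw [P]
  have h1 : 0 < ∏ i ∈ Finset.range m, (θ + i) :=
    Finset.prod_pos fun i _ => by positivity
  positivity

end WattersonAux

open WattersonAux

/-- Watterson's conditioning representation: if `Z_1, …, Z_n` are independent with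
`Z_j ~ Poisson(θ/j)`, then the conditional distribution of `(Z_1, …, Z_n)` given
`∑ j·Z_j = n` is the Ewens Sampling Formula ESF(θ):  for every `c` with `∑ j·c_j = n`,
`P[Z = c ∧ T = n] / P[T = n] = (n!/θ_(n)) ∏_j (θ/j)^{c_j}/c_j!`. -/
theorem watterson_conditioning (θ : ℝ) (hθ : 0 < θ) (n : ℕ) (hn : 1 ≤ n)
    (c : Fin n → ℕ) (hc : (∑ j : Fin n, (j.1 + 1) * c j) = n) :
    (∏ j : Fin n, Real.exp (-(θ / (j.1 + 1))) * (θ / (j.1 + 1)) ^ c j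
        / (Nat.factorial (c j))) /
      (∑' z : Fin n → ℕ,
        (if (∑ j : Fin n, (j.1 + 1) * z j) = n then
          ∏ j : Fin n, Real.exp (-(θ / (j.1 + 1))) * (θ / (j.1 + 1)) ^ z j
            / (Nat.factorial (z j))
        else 0))
      = ((Nat.factorial n : ℝ) / ∏ i ∈ range n, (θ + i)) *
          ∏ j : Fin n, (θ / (j.1 + 1)) ^ c j / (Nat.factorial (c j)) := by
  classical
  set E : ℝ := ∏ j : Fin n, Real.exp (-(θ / (j.1 + 1))) with hE
  have hEpos : 0 < E := Finset.prod_pos fun j _ => Real.exp_pos _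
  have hprod : ∀ z : Fin n → ℕ,
      (∏ j : Fin n, Real.exp (-(θ / (j.1 + 1))) * (θ / (j.1 + 1)) ^ z j
        / (Nat.factorial (z j))) = E * w θ z := by
    intro z
    rw [hE, w, ← Finset.prod_mul_distrib]
    refine Finset.prod_congr rfl fun j _ => ?_
    rw [mul_div_assoc]
  have htsum : (∑' z : Fin n → ℕ,
      (if (∑ j : Fin n, (j.1 + 1) * z j) = n then
        ∏ j : Fin n, Real.exp (-(θ / (j.1 + 1))) * (θ / (j.1 + 1)) ^ z j
          / (Nat.factorial (z j))
      else 0)) = E * A θ n n := by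
    rw [tsum_eq_sum (s := S n n) (fun z hz => by
      rw [if_neg]; intro h; exact hz (mem_S.mpr h))]
    rw [A, Finset.mul_sum]
    refine Finset.sum_congr rfl fun z hz => ?_
    rw [if_pos (mem_S.mp hz), hprod]
  rw [htsum, hprod c, A_eq_P θ n le_rfl]
  have hQpos : 0 < ∏ i ∈ Finset.range n, (θ + i) :=
    Finset.prod_pos fun i _ => by positivity
  have hfac : (0:ℝ) < Nat.factorial n := by positivity
  rw [P, w]
  rw [mul_div_mul_left _ _ (ne_of_gt hEpos)]
  rw [div_div_eq_mul_div]
  ring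
end
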